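/- Let k ≥ 2, n ≥ k and 1 ≤ ℓ ≤ n-1, and let M = M_ℓ be the block diagonal weight matrix. Let J = {j_1 < ... < j_k} ∈ I_{k,n} and define τ ∈ S_k by τ = id if j_1 > ℓ or j_2 ≤ ℓ, and τ = (1 2) (the transposition of 1 and 2) otherwise. Then for every σ ∈ S_k with σ ≠ τ, one has Σ_{i=1}^k M(i, j_{σ(i)}) > Σ_{i=1}^k M(i, j_{τ(i)}). Consequently the initial term of the Plücker form φ_n(P_J) with respect to M_ℓ is the single monomial x_{1,j_1} x_{2,j_2} ··· x_{k,j_k} if j_1 > ℓ or j_2 ≤ ℓ, and x_{1,j_2} x_{2,j_1} x_{3,j_3} ··· x_{k,j_k} otherwise. -/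

import Mathlib

open MvPolynomial

/-- `IsIdx n k J` : `J` is a strictly increasing `k`-tuple with entries in `{1, …, n}`,
representing an element `{J 0 < J 1 < … < J (k-1)}` of `I_{k,n}`. -/
def IsIdx (n k : ℕ) (J : Fin k → ℕ) : Prop :=
  StrictMono J ∧ ∀ s, 1 ≤ J s ∧ J s ≤ n

/-- Componentwise (Bruhat) order on sorted tuples. -/
def TupLe {k : ℕ} (I J : Fin k → ℕ) : Prop := ∀ s, I s ≤ J s

/-- Index type of the Plücker variables `P_I`, `I ∈ I_{k,n}`. -/
def PlVar (n k : ℕ) : Type := {J : Fin k → ℕ // IsIdx n k J}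

/-- The number of entries of `J` lying in `{1, …, ℓ}`. -/
def nSmall {k : ℕ} (ℓ : ℕ) (J : Fin k → ℕ) : ℕ :=
  (Finset.univ.filter fun s => J s ≤ ℓ).card

/-- Row assignment of the block diagonal matching field `B_ℓ` : the entry of `J` in sorted
position `i` (0-indexed) is placed in this (1-indexed) row. -/
def mfRow {k : ℕ} (ℓ : ℕ) (J : Fin k → ℕ) (i : Fin k) : ℕ :=
  if 2 ≤ k ∧ nSmall ℓ J = 1 then
    (if (i : ℕ) = 0 then 2 else if (i : ℕ) = 1 then 1 else (i : ℕ) + 1)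
  else (i : ℕ) + 1

/-- The monomial map `φ_ℓ` of the block diagonal matching field `B_ℓ`. -/
noncomputable def phiMF (K : Type*) [Field K] (n k ℓ : ℕ) :
    MvPolynomial (PlVar n k) K →ₐ[K] MvPolynomial (ℕ × ℕ) K :=
  aeval fun J => ∏ i : Fin k, X (mfRow ℓ J.val i, J.val i)

/-- The Plücker map, sending `P_J` to the `k × k` minor on columns `J`
of the generic matrix `(x_{i,j})`. -/
noncomputable def pluMap (K : Type*) [Field K] (n k : ℕ) :
    MvPolynomial (PlVar n k) K →ₐ[K] MvPolynomial (ℕ × ℕ) K :=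
  aeval fun J =>
    (Matrix.of fun r c : Fin k => (X ((r : ℕ) + 1, J.val c) : MvPolynomial (ℕ × ℕ) K)).det

/-- Restriction `G|_T = (G + ⟨P_I : I ∉ T⟩) ∩ K[P_I : I ∈ T]` of an ideal to the
variables indexed by `T`. -/
noncomputable def restrictIdeal {K : Type*} [Field K] {n k : ℕ}
    (G : Ideal (MvPolynomial (PlVar n k) K)) (T : Set (PlVar n k)) :
    Ideal (MvPolynomial T K) :=
  Ideal.comap (rename fun x : T => (x : PlVar n k))
    (G ⊔ Ideal.span (X '' {J | J ∉ T}))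

/-- An ideal of a polynomial ring is monomial-free if it contains no monomial. -/
def MonomialFree {K : Type*} [Field K] {σ : Type*} (I : Ideal (MvPolynomial σ K)) : Prop :=
  ∀ m : σ →₀ ℕ, (monomial m (1 : K)) ∉ I

/-- `T_w^v = {I ∈ I_{k,n} : v ≤ I ≤ w}`. -/
def TWV {n k : ℕ} (v w : PlVar n k) : Set (PlVar n k) :=
  {J | TupLe v.val J.val ∧ TupLe J.val w.val}

/-- `{I ∈ I_{k,n} : I ≤ w}`. -/
def TleW {n k : ℕ} (w : PlVar n k) : Set (PlVar n k) := {J | TupLe J.val w.val}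

/-- `{I ∈ I_{k,n} : v ≤ I}`. -/
def TgeV {n k : ℕ} (v : PlVar n k) : Set (PlVar n k) := {J | TupLe v.val J.val}

/-- The weight matrix `M_ℓ` (rows and columns 1-indexed). -/
def Mmat (n ℓ : ℕ) (i j : ℕ) : ℤ :=
  if i = 2 then (if j ≤ ℓ then (ℓ : ℤ) - j + 1 else (n : ℤ) - j + ℓ + 1)
  else ((i : ℤ) - 1) * ((n : ℤ) - j + 1)

/-- The weight `w_ℓ(P_J)` induced by `M_ℓ` on the Plücker variable `P_J`. -/
def wVec (n ℓ : ℕ) {k : ℕ} (J : Fin k → ℕ) : ℤ :=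
  ∑ i : Fin k, Mmat n ℓ (mfRow ℓ J i) (J i)

/-- Weight of an exponent vector with respect to a weight vector `u`. -/
def expWt {σ : Type*} (u : σ → ℤ) (m : σ →₀ ℕ) : ℤ := m.sum fun i e => u i * (e : ℤ)

/-- Initial form of a polynomial: the sum of its terms of minimal `u`-weight. -/
noncomputable def initialForm {K σ : Type*} [Field K] (u : σ → ℤ) (f : MvPolynomial σ K) :
    MvPolynomial σ K :=
  ∑ m ∈ f.support.filter (fun m => ∀ m' ∈ f.support, expWt u m ≤ expWt u m'),
    monomial m (coeff m f)

/-- Initial ideal with respect to the weight vector `u`. -/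
noncomputable def initialIdeal {K σ : Type*} [Field K] (u : σ → ℤ)
    (I : Ideal (MvPolynomial σ K)) : Ideal (MvPolynomial σ K) :=
  Ideal.span {g | ∃ f ∈ I, g = initialForm u f}

/-- `w_0 I = {n + 1 - i : i ∈ I}`, as a sorted tuple. -/
def w0t (n : ℕ) {k : ℕ} (I : Fin k → ℕ) : Fin k → ℕ :=
  fun s => n + 1 - I ⟨k - 1 - (s : ℕ), by have := s.isLt; omega⟩

/-- Membership in `Z_{k,n}` : either `J = {1, …, k-1, i}` with `k ≤ i ≤ n`,
or `J = {1, …, k+1} \\ {i}` with `1 ≤ i ≤ k-1`. -/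
def ZPred (n k : ℕ) (J : Fin k → ℕ) : Prop :=
  (∃ i, k ≤ i ∧ i ≤ n ∧
    ∀ s : Fin k, J s = if (s : ℕ) + 1 < k then (s : ℕ) + 1 else i) ∨
  (∃ i, 1 ≤ i ∧ i ≤ k - 1 ∧
    ∀ s : Fin k, J s = if (s : ℕ) + 1 < i then (s : ℕ) + 1 else (s : ℕ) + 2)

/-- A two-column semi-standard Young tableau with columns `I`, `J`. -/
def SSYT (n k : ℕ) (I J : Fin k → ℕ) : Prop :=
  IsIdx n k I ∧ IsIdx n k J ∧ ∀ s, I s ≤ J s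

/-- The map `Γ_ℓ` on two-column semi-standard Young tableaux (columns as sorted tuples). -/
def Gamma (ℓ : ℕ) {k : ℕ} (I J : Fin k → ℕ) : (Fin k → ℕ) × (Fin k → ℕ) :=
  if h : 2 ≤ k then
    let i0 := I ⟨0, by omega⟩
    let i1 := I ⟨1, by omega⟩
    let j0 := J ⟨0, by omega⟩
    let j1 := J ⟨1, by omega⟩
    if (i0 ≤ ℓ ∧ i1 ≤ ℓ ∧ j0 ≤ ℓ ∧ ℓ < j1 ∧ i0 < j0 ∧ j0 < i1) ∨
       (i0 ≤ ℓ ∧ ℓ < i1 ∧ ℓ < j0 ∧ ℓ < j1 ∧ j0 < i1 ∧ i1 < j1) then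
      ((fun s => if (s : ℕ) = 0 then j0 else I s), (fun s => if (s : ℕ) = 0 then i0 else J s))
    else (I, J)
  else (I, J)

/-- A column (a `k`-subset given as a sorted tuple) displayed in `B_ℓ`-order:
when `k ≥ 2` and exactly one entry is `≤ ℓ`, the two smallest entries are swapped. -/
def rowArrange (ℓ : ℕ) {k : ℕ} (C : Fin k → ℕ) : Fin k → ℕ :=
  if h : 2 ≤ k then
    (if nSmall ℓ C = 1 then
      fun s => if (s : ℕ) = 0 then C ⟨1, by omega⟩
        else if (s : ℕ) = 1 then C ⟨0, by omega⟩ else C s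
    else C)
  else C

/-- Two two-column tableaux (with columns `A,B` resp. `C,D`) are row-wise equal. -/
def rowEq {k : ℕ} (A B C D : Fin k → ℕ) : Prop :=
  ∀ s, ({A s, B s} : Multiset ℕ) = {C s, D s}

/-- The kernel of the restricted monomial map `φ_ℓ|_T`. -/
noncomputable def kerPhiRes (K : Type*) [Field K] (n k ℓ : ℕ) (T : Set (PlVar n k)) :
    Ideal (MvPolynomial T K) :=
  RingHom.ker ((phiMF K n k ℓ).comp (rename fun x : T => (x : PlVar n k)))

/-- The ideal `I(X_w^v)` of the Richardson variety: the restriction of the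
Plücker ideal `G_{k,n}` to the variables in `T_w^v`. -/
noncomputable def richIdeal (K : Type*) [Field K] (n k : ℕ) (v w : PlVar n k) :
    Ideal (MvPolynomial (TWV v w) K) :=
  restrictIdeal (RingHom.ker (pluMap K n k)) (TWV v w)

/-- Every non-identity permutation of a finite linear order has an inversion
supported on its support. -/
lemma exists_inversion {k : ℕ} (π : Equiv.Perm (Fin k)) (hπ : π ≠ 1) :
    ∃ i j : Fin k, i < j ∧ π j < π i ∧ π i ≠ i ∧ π j ≠ j := by
  classical
  have hne : (Finset.univ.filter fun x => π x ≠ x).Nonempty := by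
    by_contra h
    rw [Finset.not_nonempty_iff_eq_empty, Finset.filter_eq_empty_iff] at h
    exact hπ (Equiv.ext fun x => not_ne_iff.1 (h (Finset.mem_univ x)))
  obtain ⟨x, hxmem, hxmin⟩ := (Finset.univ.filter fun x => π x ≠ x).exists_min_image
    id hne
  rw [Finset.mem_filter] at hxmem
  have hx : π x ≠ x := hxmem.2
  have hlt : ∀ y, π y ≠ y → x ≤ y := fun y hy =>
    hxmin y (Finset.mem_filter.2 ⟨Finset.mem_univ y, hy⟩)
  have hxlt : x < π x := by
    rcases lt_or_gt_of_ne (Ne.symm hx) with h | h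
    · exact h
    · exfalso
      have hfix : π (π x) = π x := by
        by_contra hne'
        exact absurd (hlt _ hne') (not_le.2 h)
      exact hx (π.injective hfix)
  have hz : π (π⁻¹ x) = x := π.apply_symm_apply x
  have hzx : π⁻¹ x ≠ x := fun h => hx (by rw [h] at hz; exact hz)
  refine ⟨x, π⁻¹ x, ?_, ?_, hx, ?_⟩
  · have hne2 : π (π⁻¹ x) ≠ π⁻¹ x := by rw [hz]; exact Ne.symm hzx
    exact lt_of_le_of_ne (hlt _ hne2) (Ne.symm hzx)
  · rw [hz]; exact hxlt
  · rw [hz]; exact Ne.symm hzx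

lemma rearr_strict {k : ℕ} (s : Finset (Fin k)) (g : Fin k → ℤ)
    (hg : ∀ i ∈ s, ∀ j ∈ s, i < j → g j < g i)
    (π : Equiv.Perm (Fin k)) (hπs : ∀ x, π x ≠ x → x ∈ s) (hπ : π ≠ 1) :
    ∑ i ∈ s, ((i : ℕ) : ℤ) * g i < ∑ i ∈ s, ((i : ℕ) : ℤ) * g (π i) := by
  have hset : {x | π x ≠ x} ⊆ ↑s := fun x hx => hπs x hx
  have hav : AntivaryOn (fun i : Fin k => ((i : ℕ) : ℤ)) g ↑s := by
    intro i hi j hj hgij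
    by_contra hle
    push_neg at hle
    have hle' : ((i : ℕ) : ℤ) < ((j : ℕ) : ℤ) := hle
    have hij : i < j := by
      rw [Fin.lt_def]; exact_mod_cast hle'
    exact absurd (hg i hi j hj hij) (not_lt.2 hgij.le)
  rw [hav.sum_mul_lt_sum_mul_comp_perm_iff hset]
  intro hcon
  obtain ⟨i, j, hij, hπji, hi, hj⟩ := exists_inversion π hπ
  have hi' : i ∈ s := hπs i hi
  have hj' : j ∈ s := hπs j hj
  have hπi : π i ∈ s := hπs _ fun h => hi (π.injective h)
  have hπj : π j ∈ s := hπs _ fun h => hj (π.injective h)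
  have hgg : g (π i) < g (π j) := hg (π j) hπj (π i) hπi hπji
  have h2 : ((j : ℕ) : ℤ) ≤ ((i : ℕ) : ℤ) := hcon hi' hj' hgg
  have h3 : (j : ℕ) ≤ (i : ℕ) := by exact_mod_cast h2
  rw [Fin.lt_def] at hij
  omega

lemma rearr_le {k : ℕ} (g : Fin k → ℤ) (hg : StrictAnti g) (π : Equiv.Perm (Fin k)) :
    ∑ i : Fin k, ((i : ℕ) : ℤ) * g i ≤ ∑ i : Fin k, ((i : ℕ) : ℤ) * g (π i) := by
  have hav : Antivary (fun i : Fin k => ((i : ℕ) : ℤ)) g := by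
    intro i j hgij
    have hji : j < i := hg.lt_iff_gt.1 hgij
    show ((j : ℕ) : ℤ) ≤ ((i : ℕ) : ℤ)
    rw [Fin.lt_def] at hji
    exact_mod_cast hji.le
  exact hav.sum_mul_le_sum_mul_comp_perm

/-- For the block diagonal weight matrix `M_ℓ` with `1 ≤ ℓ ≤ n-1` and
`k ≥ 2`, the unique minimizer of the `M_ℓ`-weight on `J = {j_1 < … < j_k}` is the identity
if `j_1 > ℓ` or `j_2 ≤ ℓ`, and the transposition `(1 2)` otherwise; every other permutation
has strictly larger weight. -/
theorem statement_2 (n k ℓ : ℕ) (hk : 2 ≤ k) (hkn : k ≤ n)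
    (hℓ1 : 1 ≤ ℓ) (hℓ2 : ℓ ≤ n - 1)
    (J : Fin k → ℕ) (hJ : IsIdx n k J) :
    ∀ σ : Equiv.Perm (Fin k),
      σ ≠ (if ℓ < J ⟨0, by omega⟩ ∨ J ⟨1, by omega⟩ ≤ ℓ then 1
            else Equiv.swap ⟨0, by omega⟩ ⟨1, by omega⟩) →
      (∑ i : Fin k, Mmat n ℓ ((i : ℕ) + 1)
          (J ((if ℓ < J ⟨0, by omega⟩ ∨ J ⟨1, by omega⟩ ≤ ℓ then 1
            else Equiv.swap ⟨0, by omega⟩ ⟨1, by omega⟩ : Equiv.Perm (Fin k)) i))) <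
        ∑ i : Fin k, Mmat n ℓ ((i : ℕ) + 1) (J (σ i)) := by
  classical
  intro σ hσ
  have h0k : 0 < k := by omega
  have h1k : 1 < k := by omega
  replace hσ : σ ≠ (if ℓ < J ⟨0, h0k⟩ ∨ J ⟨1, h1k⟩ ≤ ℓ then 1
      else Equiv.swap ⟨0, h0k⟩ ⟨1, h1k⟩) := hσ
  show (∑ i : Fin k, Mmat n ℓ ((i : ℕ) + 1)
      (J ((if ℓ < J ⟨0, h0k⟩ ∨ J ⟨1, h1k⟩ ≤ ℓ then 1
        else Equiv.swap ⟨0, h0k⟩ ⟨1, h1k⟩ : Equiv.Perm (Fin k)) i))) <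
      ∑ i : Fin k, Mmat n ℓ ((i : ℕ) + 1) (J (σ i))
  set z0 : Fin k := ⟨0, h0k⟩ with hz0
  set z1 : Fin k := ⟨1, h1k⟩ with hz1
  set τ : Equiv.Perm (Fin k) := if ℓ < J z0 ∨ J z1 ≤ ℓ then 1 else Equiv.swap z0 z1 with hτ
  set b : Fin k → ℤ := fun s => (n : ℤ) + 1 - (J s : ℤ) with hb
  have hbanti : StrictAnti b := by
    intro i j hij
    have h1 := hJ.1 hij
    have h2 : (J i : ℤ) < (J j : ℤ) := by exact_mod_cast h1
    simp only [hb]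
    linarith
  have hz01 : z0 ≠ z1 := by simp [hz0, hz1, Fin.ext_iff]
  have hz01lt : z0 < z1 := by rw [Fin.lt_def]; simp [hz0, hz1]
  have hJ01 : J z0 < J z1 := hJ.1 hz01lt
  have hz0le : ∀ s : Fin k, z0 ≤ s := by
    intro s; rw [Fin.le_def]; simp [hz0]
  have key : ∀ π : Equiv.Perm (Fin k),
      ∑ i : Fin k, Mmat n ℓ ((i : ℕ) + 1) (J (π i)) =
      (∑ i : Fin k, ((i : ℕ) : ℤ) * b (π i)) + (ℓ : ℤ)
        - (if J (π z1) ≤ ℓ then (n : ℤ) else 0) := by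
    intro π
    have hpt : ∀ i : Fin k, Mmat n ℓ ((i : ℕ) + 1) (J (π i)) =
        ((i : ℕ) : ℤ) * b (π i) +
          (if i = z1 then ((ℓ : ℤ) - if J (π i) ≤ ℓ then (n : ℤ) else 0) else 0) := by
      intro i
      by_cases hi : i = z1
      · subst hi
        have h2 : ((z1 : ℕ) + 1) = 2 := by simp [hz1]
        rw [if_pos rfl, h2]
        simp only [Mmat, if_pos rfl]
        have hv1 : ((z1 : ℕ) : ℤ) = 1 := by simp [hz1]
        by_cases hJl : J (π z1) ≤ ℓ
        · rw [if_pos hJl, if_pos hJl]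
          simp only [hb, hv1]
          push_cast
          ring
        · rw [if_neg hJl, if_neg hJl]
          simp only [hb, hv1]
          push_cast
          ring
      · have hi1 : (i : ℕ) ≠ 1 := fun h => hi (by rw [hz1]; exact Fin.ext (by simpa using h))
        have hi2 : (i : ℕ) + 1 ≠ 2 := by omega
        rw [if_neg hi]
        simp only [Mmat, if_neg hi2, hb]
        push_cast
        ring
    rw [Finset.sum_congr rfl fun i _ => hpt i, Finset.sum_add_distrib,
      Finset.sum_ite_eq' Finset.univ z1, if_pos (Finset.mem_univ z1)]
    ring
  rw [key τ, key σ]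
  by_cases hc : ℓ < J z0 ∨ J z1 ≤ ℓ
  · rw [if_pos hc] at hτ
    rw [hτ] at hσ ⊢
    simp only [Equiv.Perm.one_apply]
    have hS : ∑ i : Fin k, ((i : ℕ) : ℤ) * b i < ∑ i : Fin k, ((i : ℕ) : ℤ) * b (σ i) :=
      rearr_strict Finset.univ b (fun i _ j _ hij => hbanti hij) σ
        (fun x _ => Finset.mem_univ x) hσ
    have hind : (if J (σ z1) ≤ ℓ then (n : ℤ) else 0) ≤ (if J z1 ≤ ℓ then (n : ℤ) else 0) := by
      rcases hc with hc | hc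
      · have h1 : ¬ J z1 ≤ ℓ := by omega
        have h2 : ¬ J (σ z1) ≤ ℓ := by
          have := hJ.1.monotone (hz0le (σ z1))
          omega
        rw [if_neg h1, if_neg h2]
      · rw [if_pos hc]
        split
        · exact le_refl _
        · exact_mod_cast Nat.zero_le n
    by_cases h1 : J z1 ≤ ℓ <;> by_cases h2 : J (σ z1) ≤ ℓ <;>
      simp only [h1, h2, if_true, if_false] at hind ⊢ <;> linarith
  · push_neg at hc
    rw [if_neg (by push_neg; exact hc)] at hτ
    rw [hτ] at hσ ⊢
    rw [Equiv.swap_apply_right, if_pos hc.1]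
    have hsmall : ∀ s : Fin k, J s ≤ ℓ → s = z0 := by
      intro s hs
      by_contra hne
      have hs1 : z1 ≤ s := by
        rw [Fin.le_def]
        have h0 : (s : ℕ) ≠ 0 := fun h => hne (by rw [hz0]; exact Fin.ext (by simpa using h))
        have hv1 : (z1 : ℕ) = 1 := by simp [hz1]
        omega
      have := hJ.1.monotone hs1
      omega
    by_cases hσ1 : σ z1 = z0
    · rw [if_pos (by rw [hσ1]; exact hc.1)]
      have main : ∑ i : Fin k, ((i : ℕ) : ℤ) * b (Equiv.swap z0 z1 i) <
          ∑ i : Fin k, ((i : ℕ) : ℤ) * b (σ i) := by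
        set π : Equiv.Perm (Fin k) := Equiv.swap z0 z1 * σ with hπ
        set g : Fin k → ℤ := fun t => b (Equiv.swap z0 z1 t) with hg
        have hπ1 : π z1 = z1 := by
          simp only [hπ, Equiv.Perm.mul_apply, hσ1, Equiv.swap_apply_left]
        have hπne : π ≠ 1 := by
          intro h
          apply hσ
          have h' : Equiv.swap z0 z1 * σ = 1 := by rw [← hπ]; exact h
          have h2 : σ = (Equiv.swap z0 z1)⁻¹ := eq_inv_of_mul_eq_one_right h'
          rw [h2, Equiv.swap_inv]
        have hcomp : ∀ i, b (σ i) = g (π i) := by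
          intro i
          simp only [hg, hπ, Equiv.Perm.mul_apply, Equiv.swap_apply_self]
        have hG : ∀ i ∈ Finset.univ.erase z1, ∀ j ∈ Finset.univ.erase z1,
            i < j → g j < g i := by
          intro i hi j hj hij
          rw [Finset.mem_erase] at hi hj
          have hijv : (i : ℕ) < (j : ℕ) := hij
          have hjv1 : (j : ℕ) ≠ 1 := fun h => hj.1 (by rw [hz1]; exact Fin.ext (by simpa using h))
          have hjv : 2 ≤ (j : ℕ) := by omega
          have hjz0 : j ≠ z0 := fun h => by
            rw [h] at hjv; simp [hz0] at hjv
          have hswj : Equiv.swap z0 z1 j = j := Equiv.swap_apply_of_ne_of_ne hjz0 hj.1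
          have hswilt : Equiv.swap z0 z1 i < j := by
            by_cases hiz : i = z0
            · rw [hiz, Equiv.swap_apply_left, Fin.lt_def]
              simp only [hz1]
              omega
            · rw [Equiv.swap_apply_of_ne_of_ne hiz hi.1]
              exact hij
          have := hbanti hswilt
          simp only [hg, hswj]
          exact this
        have hπsupp : ∀ x, π x ≠ x → x ∈ Finset.univ.erase z1 := by
          intro x hx
          rw [Finset.mem_erase]
          exact ⟨fun h => hx (by rw [h, hπ1]), Finset.mem_univ x⟩
        have hstrict := rearr_strict (Finset.univ.erase z1) g hG π hπsupp hπne
        have hsplit1 : ∑ i : Fin k, ((i : ℕ) : ℤ) * b (Equiv.swap z0 z1 i) =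
            (∑ i ∈ Finset.univ.erase z1, ((i : ℕ) : ℤ) * g i) + ((z1 : ℕ) : ℤ) * g z1 := by
          rw [Finset.sum_erase_add Finset.univ _ (Finset.mem_univ z1)]
        have hsplit2 : ∑ i : Fin k, ((i : ℕ) : ℤ) * b (σ i) =
            (∑ i ∈ Finset.univ.erase z1, ((i : ℕ) : ℤ) * g (π i)) + ((z1 : ℕ) : ℤ) * g (π z1) := by
          rw [Finset.sum_congr rfl fun i _ => by rw [hcomp i]]
          rw [Finset.sum_erase_add Finset.univ _ (Finset.mem_univ z1)]
        rw [hsplit1, hsplit2, hπ1]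
        linarith
      linarith
    · rw [if_neg (fun h => hσ1 (hsmall _ h))]
      have hle : ∑ i : Fin k, ((i : ℕ) : ℤ) * b i ≤ ∑ i : Fin k, ((i : ℕ) : ℤ) * b (σ i) :=
        rearr_le b hbanti σ
      have hτeq : ∑ i : Fin k, ((i : ℕ) : ℤ) * b (Equiv.swap z0 z1 i) =
          (∑ i : Fin k, ((i : ℕ) : ℤ) * b i) + (b z0 - b z1) := by
        have hzero : ∀ i ∈ Finset.univ, i ∉ ({z0, z1} : Finset (Fin k)) →
            ((i : ℕ) : ℤ) * b (Equiv.swap z0 z1 i) - ((i : ℕ) : ℤ) * b i = 0 := by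
          intro i _ hi
          rw [Finset.mem_insert, Finset.mem_singleton] at hi
          push_neg at hi
          rw [Equiv.swap_apply_of_ne_of_ne hi.1 hi.2]
          ring
        have hsub : ∑ i : Fin k, (((i : ℕ) : ℤ) * b (Equiv.swap z0 z1 i) - ((i : ℕ) : ℤ) * b i)
            = ∑ i ∈ ({z0, z1} : Finset (Fin k)),
                (((i : ℕ) : ℤ) * b (Equiv.swap z0 z1 i) - ((i : ℕ) : ℤ) * b i) :=
          (Finset.sum_subset (Finset.subset_univ _) hzero).symm
        rw [Finset.sum_sub_distrib, Finset.sum_pair hz01, Equiv.swap_apply_left,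
          Equiv.swap_apply_right] at hsub
        have hv0 : ((z0 : ℕ) : ℤ) = 0 := by simp [hz0]
        have hv1 : ((z1 : ℕ) : ℤ) = 1 := by simp [hz1]
        rw [hv0, hv1] at hsub
        linarith
      have hbd : b z0 - b z1 < (n : ℤ) := by
        have h1 : 1 ≤ J z0 := (hJ.2 z0).1
        have h2 : J z1 ≤ n := (hJ.2 z1).2
        have h1' : (1 : ℤ) ≤ (J z0 : ℤ) := by exact_mod_cast h1
        have h2' : (J z1 : ℤ) ≤ (n : ℤ) := by exact_mod_cast h2
        simp only [hb]
        linarith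
      rw [hτeq]
      linarith
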